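/- Let k ≥ 1 and L ≥ 1 be integers with 2k + L ≤ n, let w ∈ ℝⁿ be a weight vector with w_i > 0 and max_i w_i = 1, let H₀ be a set of k indices carrying k largest weights of w and H₁ a set of k+L indices carrying k+L smallest weights of w (disjoint from H₀). If ‖w_{H₀}‖₁ < ‖w_{H₁}‖₁, then sup{ ‖z_{T₂ᶜ}‖₂²/‖z_{T₂}‖₂² : z ∈ ℝⁿ, z ≠ 0, ‖z_{H₀}‖_w = ‖z_{H₀ᶜ}‖_w, |supp(z)| = 2k+L } ≥ (L/k) / ( ‖w_{H₁}‖₁²/‖w_{H₀}‖₁² + 1 ). -/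

import Mathlib

open scoped BigOperators ENNReal RealInnerProductSpace
open MeasureTheory Metric

noncomputable section

/-- The set of `k`-sparse vectors of `ℝⁿ`. -/
def sparseVecs (n k : ℕ) : Set (EuclideanSpace ℝ (Fin n)) :=
  {x | ∃ s : Finset (Fin n), s.card ≤ k ∧ ∀ i ∉ s, x i = 0}

/-- Descent set (collection of descent vectors) of `R` at `x`. -/
def descentCone {n : ℕ} (R : EuclideanSpace ℝ (Fin n) → ℝ) (x : EuclideanSpace ℝ (Fin n)) :
    Set (EuclideanSpace ℝ (Fin n)) := {z | R (x + z) ≤ R x}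

/-- Descent vectors of `R` at the model set `S`. -/
def descentConeSet {n : ℕ} (R : EuclideanSpace ℝ (Fin n) → ℝ)
    (S : Set (EuclideanSpace ℝ (Fin n))) : Set (EuclideanSpace ℝ (Fin n)) :=
  ⋃ x ∈ S, descentCone R x

/-- Weighted ℓ¹-norm `‖z‖_w = ∑ i, w i * |z i|`. -/
def wNorm {n : ℕ} (w : Fin n → ℝ) (z : EuclideanSpace ℝ (Fin n)) : ℝ := ∑ i, w i * |z i|

/-- Restriction of a vector to a set of coordinates (`z_S`). -/
def coordRestrict {n : ℕ} (z : EuclideanSpace ℝ (Fin n)) (S : Finset (Fin n)) :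
    EuclideanSpace ℝ (Fin n) := WithLp.toLp 2 (fun i => if i ∈ S then z i else 0)

lemma wNorm_restrict {n : ℕ} (w : Fin n → ℝ) (z : EuclideanSpace ℝ (Fin n)) (S : Finset (Fin n)) :
    wNorm w (coordRestrict z S) = ∑ i ∈ S, w i * |z i| := by
  unfold wNorm coordRestrict
  simp only [PiLp.toLp_apply]
  rw [show (∑ i, w i * |if i ∈ S then z i else 0|) = ∑ i, if i ∈ S then w i * |z i| else 0 from
    Finset.sum_congr rfl fun i _ => by split <;> simp]
  rw [Finset.sum_ite_mem, Finset.univ_inter]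

lemma normsq_restrict {n : ℕ} (z : EuclideanSpace ℝ (Fin n)) (S : Finset (Fin n)) :
    ‖coordRestrict z S‖ ^ 2 = ∑ i ∈ S, (z i) ^ 2 := by
  rw [EuclideanSpace.norm_eq, Real.sq_sqrt (by positivity)]
  rw [show (∑ i, ‖coordRestrict z S i‖ ^ 2) = ∑ i, if i ∈ S then (z i)^2 else 0 from
    Finset.sum_congr rfl fun i _ => by simp only [coordRestrict, PiLp.toLp_apply]; split <;> simp [sq_abs]]
  rw [Finset.sum_ite_mem, Finset.univ_inter]

lemma T_sub_supp {n : ℕ} (z : EuclideanSpace ℝ (Fin n)) (T : Finset (Fin n))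
    (hmax : ∀ i ∈ T, ∀ j ∉ T, |z j| ≤ |z i|)
    (hlt : T.card < (Finset.univ.filter fun i => z i ≠ 0).card) :
    T ⊆ Finset.univ.filter fun i => z i ≠ 0 := by
  intro i hi
  by_contra h
  have hzi : z i = 0 := by
    by_contra h'
    exact h (Finset.mem_filter.mpr ⟨Finset.mem_univ i, h'⟩)
  have : ¬ (Finset.univ.filter fun i => z i ≠ 0) ⊆ T := fun hs =>
    absurd (Finset.card_le_card hs) (by omega)
  obtain ⟨j, hj, hjT⟩ := Finset.not_subset.mp this
  have h1 := hmax i hi j hjT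
  have hzj : z j ≠ 0 := (Finset.mem_filter.mp hj).2
  rw [hzi, abs_zero] at h1
  exact hzj (abs_nonpos_iff.mp h1)

/-- Lemma 5 of the paper, a lower bound on the constrained supremum `B_L(R)` for a
weighted ℓ¹-norm whose `k` largest weights have less mass than its `k+L` smallest weights. -/
theorem BL_lower_bound
    (n k L : ℕ) (hk : 1 ≤ k) (hL : 1 ≤ L) (hn : 2 * k + L ≤ n)
    (w : Fin n → ℝ) (hpos : ∀ i, 0 < w i) (hle : ∀ i, w i ≤ 1) (hmax : ∃ i, w i = 1)
    (T₂ : EuclideanSpace ℝ (Fin n) → Finset (Fin n))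
    (hT₂ : ∀ z, (T₂ z).card = 2 * k ∧ ∀ i ∈ T₂ z, ∀ j ∉ T₂ z, |z j| ≤ |z i|)
    (H₀ H₁ : Finset (Fin n)) (hH₀card : H₀.card = k) (hH₁card : H₁.card = k + L)
    (hdisj : Disjoint H₀ H₁)
    (hH₀ : ∀ i ∈ H₀, ∀ j ∉ H₀, w j ≤ w i)
    (hH₁ : ∀ i ∈ H₁, ∀ j ∉ H₁, w i ≤ w j)
    (hw : ∑ i ∈ H₀, w i < ∑ i ∈ H₁, w i) :
    ((L : ℝ) / k) / ((∑ i ∈ H₁, w i) ^ 2 / (∑ i ∈ H₀, w i) ^ 2 + 1)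
      ≤ sSup {r : ℝ | ∃ z : EuclideanSpace ℝ (Fin n), z ≠ 0 ∧
          wNorm w (coordRestrict z H₀) = wNorm w (coordRestrict z H₀ᶜ) ∧
          (Finset.univ.filter fun i => z i ≠ 0).card = 2 * k + L ∧
          r = ‖coordRestrict z (T₂ z)ᶜ‖ ^ 2 / ‖coordRestrict z (T₂ z)‖ ^ 2} := by
  classical
  set W₀ : ℝ := ∑ i ∈ H₀, w i with hW₀def
  set W₁ : ℝ := ∑ i ∈ H₁, w i with hW₁def
  have hH₀ne : H₀.Nonempty := Finset.card_pos.mp (by omega)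
  have hH₁ne : H₁.Nonempty := Finset.card_pos.mp (by omega)
  have hW₀pos : 0 < W₀ := Finset.sum_pos (fun i _ => hpos i) hH₀ne
  have hW₁pos : 0 < W₁ := Finset.sum_pos (fun i _ => hpos i) hH₁ne
  -- boundedness
  have hbdd : BddAbove {r : ℝ | ∃ z : EuclideanSpace ℝ (Fin n), z ≠ 0 ∧
          wNorm w (coordRestrict z H₀) = wNorm w (coordRestrict z H₀ᶜ) ∧
          (Finset.univ.filter fun i => z i ≠ 0).card = 2 * k + L ∧
          r = ‖coordRestrict z (T₂ z)ᶜ‖ ^ 2 / ‖coordRestrict z (T₂ z)‖ ^ 2} := by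
    refine ⟨(L : ℝ), ?_⟩
    rintro r ⟨z, hz, -, hcard, rfl⟩
    obtain ⟨hTcard, hTmax⟩ := hT₂ z
    set T := T₂ z with hTdef
    have hTsub' : T ⊆ Finset.univ.filter fun i => z i ≠ 0 :=
      T_sub_supp z T hTmax (by omega)
    set supp := Finset.univ.filter fun i => z i ≠ 0 with hsuppdef
    have hTsub : T ⊆ supp := hTsub'
    have hTne : T.Nonempty := Finset.card_pos.mp (by omega)
    obtain ⟨i₀, hi₀⟩ := hTne
    have hzi₀ : z i₀ ≠ 0 := (Finset.mem_filter.mp (hTsub hi₀)).2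
    have hc : 0 < (z i₀) ^ 2 := by positivity
    have hsum_eq : ∑ j ∈ Tᶜ, (z j) ^ 2 = ∑ j ∈ supp \ T, (z j) ^ 2 := by
      refine (Finset.sum_subset ?_ ?_).symm
      · intro j hj
        exact Finset.mem_compl.mpr (Finset.mem_sdiff.mp hj).2
      · intro j hj hj'
        have hjT : j ∉ T := Finset.mem_compl.mp hj
        have : j ∉ supp := fun hs => hj' (Finset.mem_sdiff.mpr ⟨hs, hjT⟩)
        have : z j = 0 := by
          by_contra h'
          exact this (Finset.mem_filter.mpr ⟨Finset.mem_univ j, h'⟩)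
        simp [this]
    have hA : ‖coordRestrict z Tᶜ‖ ^ 2 ≤ (L : ℝ) * (z i₀) ^ 2 := by
      rw [normsq_restrict, hsum_eq]
      have hcardL : (supp \ T).card = L := by
        rw [Finset.card_sdiff_of_subset hTsub]; omega
      calc ∑ j ∈ supp \ T, (z j) ^ 2
          ≤ ∑ _j ∈ supp \ T, (z i₀) ^ 2 := by
            refine Finset.sum_le_sum fun j hj => ?_
            have h1 := hTmax i₀ hi₀ j (Finset.mem_sdiff.mp hj).2
            calc (z j) ^ 2 = |z j| ^ 2 := (sq_abs _).symm
              _ ≤ |z i₀| ^ 2 := by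
                  exact pow_le_pow_left₀ (abs_nonneg _) h1 2
              _ = (z i₀) ^ 2 := sq_abs _
        _ = (L : ℝ) * (z i₀) ^ 2 := by
            rw [Finset.sum_const, hcardL]; simp [nsmul_eq_mul]
    have hB : (z i₀) ^ 2 ≤ ‖coordRestrict z T‖ ^ 2 := by
      rw [normsq_restrict]
      exact Finset.single_le_sum (f := fun j => (z j) ^ 2) (fun j _ => sq_nonneg _) hi₀
    have hBpos : 0 < ‖coordRestrict z T‖ ^ 2 := lt_of_lt_of_le hc hB
    calc ‖coordRestrict z Tᶜ‖ ^ 2 / ‖coordRestrict z T‖ ^ 2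
        ≤ ((L : ℝ) * (z i₀) ^ 2) / (z i₀) ^ 2 :=
          div_le_div₀ (by positivity) hA hc hB
      _ = (L : ℝ) := by field_simp
  -- the witness
  set z : EuclideanSpace ℝ (Fin n) := WithLp.toLp 2 (fun i => if i ∈ H₀ then W₁ else if i ∈ H₁ then W₀ else 0)
    with hzdef
  have hzH₀ : ∀ i ∈ H₀, z i = W₁ := fun i hi => by simp [hzdef, hi]
  have hzH₁ : ∀ i ∈ H₁, z i = W₀ := fun i hi => by
    have : i ∉ H₀ := fun h => (Finset.disjoint_left.mp hdisj h) hi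
    simp [hzdef, this, hi]
  have hz0 : ∀ i, i ∉ H₀ → i ∉ H₁ → z i = 0 := fun i h0 h1 => by simp [hzdef, h0, h1]
  have hsupp : (Finset.univ.filter fun i => z i ≠ 0) = H₀ ∪ H₁ := by
    ext i
    simp only [Finset.mem_filter, Finset.mem_univ, true_and, Finset.mem_union]
    constructor
    · intro h
      by_contra hc
      push_neg at hc
      exact h (hz0 i hc.1 hc.2)
    · rintro (h | h)
      · rw [hzH₀ i h]; exact ne_of_gt hW₁pos
      · rw [hzH₁ i h]; exact ne_of_gt hW₀pos
  have hsuppcard : (Finset.univ.filter fun i => z i ≠ 0).card = 2 * k + L := by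
    rw [hsupp, Finset.card_union_of_disjoint hdisj, hH₀card, hH₁card]; omega
  obtain ⟨hTcard, hTmax⟩ := hT₂ z
  set T := T₂ z with hTdef
  have hTsub : T ⊆ H₀ ∪ H₁ := by
    rw [← hsupp]; exact T_sub_supp z T hTmax (by omega)
  have hH₀T : H₀ ⊆ T := by
    intro j hj
    by_contra hjT
    have key : T ⊆ H₀ := by
      intro i hi
      have h1 := hTmax i hi j hjT
      rw [hzH₀ j hj, abs_of_pos hW₁pos] at h1
      by_contra hiH₀
      rcases Finset.mem_union.mp (hTsub hi) with h | h
      · exact hiH₀ h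
      · rw [hzH₁ i h, abs_of_pos hW₀pos] at h1
        exact absurd h1 (not_le.mpr hw)
    have := Finset.card_le_card key
    omega
  have hTH₁ : (T \ H₁) = H₀ := by
    ext i
    simp only [Finset.mem_sdiff]
    constructor
    · rintro ⟨hi, hi1⟩
      rcases Finset.mem_union.mp (hTsub hi) with h | h
      · exact h
      · exact absurd h hi1
    · intro hi
      exact ⟨hH₀T hi, fun h => (Finset.disjoint_left.mp hdisj hi) h⟩
  have hTH₁card : (T ∩ H₁).card = k := by
    have h1 := Finset.card_sdiff_add_card_inter T H₁
    rw [hTH₁, hH₀card, hTcard] at h1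
    omega
  have hH₁Tcard : (H₁ \ T).card = L := by
    have h1 := Finset.card_sdiff_add_card_inter H₁ T
    rw [Finset.inter_comm, hTH₁card, hH₁card] at h1
    omega
  -- value of the ratio
  have hnum : ‖coordRestrict z Tᶜ‖ ^ 2 = (L : ℝ) * W₀ ^ 2 := by
    rw [normsq_restrict]
    have heq : ∑ j ∈ Tᶜ, (z j) ^ 2 = ∑ j ∈ H₁ \ T, (z j) ^ 2 := by
      refine (Finset.sum_subset ?_ ?_).symm
      · intro j hj
        exact Finset.mem_compl.mpr (Finset.mem_sdiff.mp hj).2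
      · intro j hj hj'
        have hjT : j ∉ T := Finset.mem_compl.mp hj
        have hj1 : j ∉ H₁ := fun h => hj' (Finset.mem_sdiff.mpr ⟨h, hjT⟩)
        have hj0 : j ∉ H₀ := fun h => hjT (hH₀T h)
        rw [hz0 j hj0 hj1]; simp
    rw [heq]
    rw [Finset.sum_congr rfl (fun j hj => by rw [hzH₁ j (Finset.mem_sdiff.mp hj).1])]
    rw [Finset.sum_const, hH₁Tcard]
    simp [nsmul_eq_mul]
  have hden : ‖coordRestrict z T‖ ^ 2 = (k : ℝ) * W₁ ^ 2 + (k : ℝ) * W₀ ^ 2 := by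
    rw [normsq_restrict]
    rw [← Finset.sum_sdiff hH₀T]
    have h1 : ∑ i ∈ T \ H₀, (z i) ^ 2 = (k : ℝ) * W₀ ^ 2 := by
      have hsub1 : T \ H₀ ⊆ H₁ := by
        intro i hi
        obtain ⟨hiT, hi0⟩ := Finset.mem_sdiff.mp hi
        rcases Finset.mem_union.mp (hTsub hiT) with h | h
        · exact absurd h hi0
        · exact h
      rw [Finset.sum_congr rfl (fun i hi => by rw [hzH₁ i (hsub1 hi)])]
      rw [Finset.sum_const, Finset.card_sdiff_of_subset hH₀T, hTcard, hH₀card]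
      have : 2 * k - k = k := by omega
      rw [this]; simp [nsmul_eq_mul]
    have h2 : ∑ i ∈ H₀, (z i) ^ 2 = (k : ℝ) * W₁ ^ 2 := by
      rw [Finset.sum_congr rfl (fun i hi => by rw [hzH₀ i hi])]
      rw [Finset.sum_const, hH₀card]; simp [nsmul_eq_mul]
    rw [h1, h2]; ring
  -- membership
  refine le_csSup hbdd ⟨z, ?_, ?_, hsuppcard, ?_⟩
  · intro h
    obtain ⟨i, hi⟩ := hH₀ne
    have : z i = 0 := by rw [h]; rfl
    rw [hzH₀ i hi] at this
    exact (ne_of_gt hW₁pos) this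
  · rw [wNorm_restrict, wNorm_restrict]
    have hl : ∑ i ∈ H₀, w i * |z i| = W₀ * W₁ := by
      rw [Finset.sum_congr rfl (fun i hi => by rw [hzH₀ i hi, abs_of_pos hW₁pos])]
      rw [← Finset.sum_mul]
    have hr : ∑ i ∈ H₀ᶜ, w i * |z i| = W₁ * W₀ := by
      have heq : ∑ i ∈ H₀ᶜ, w i * |z i| = ∑ i ∈ H₁, w i * |z i| := by
        refine (Finset.sum_subset ?_ ?_).symm
        · intro i hi
          exact Finset.mem_compl.mpr fun h => (Finset.disjoint_left.mp hdisj h) hi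
        · intro i hi hi'
          rw [hz0 i (Finset.mem_compl.mp hi) hi']; simp
      rw [heq]
      rw [Finset.sum_congr rfl (fun i hi => by rw [hzH₁ i hi, abs_of_pos hW₀pos])]
      rw [← Finset.sum_mul]
    rw [hl, hr, mul_comm]
  · rw [← hTdef, hnum, hden]
    have hkne : (k : ℝ) ≠ 0 := Nat.cast_ne_zero.mpr (by omega)
    have hW₀ne : W₀ ≠ 0 := ne_of_gt hW₀pos
    rw [hW₀def, hW₁def] at *
    field_simp


end
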